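/- Let (G, M, I) be a formal context and A ⊆ M. If an implication E → d with E ⊆ A and d ∈ M \ A holds in the context and has nonempty support (there exists g ∈ G with E ⊆ g' and d ∈ g'), then there exists B ∈ MC_A such that E ⊆ B ⊆ A and d ∈ B'' \ A. -/

import Mathlib

namespace FCA

variable {G M : Type*}

/-- The intent `g'` of an object `g`: the set of attributes it has. -/
def intent [Fintype M] (I : G → M → Prop) [∀ g m, Decidable (I g m)] (g : G) : Finset M :=
  Finset.univ.filter (fun m => I g m)

/-- The extent `A'` of a set of attributes `A`. -/
def extent [Fintype G] (I : G → M → Prop) [∀ g m, Decidable (I g m)] (A : Finset M) :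
    Finset G :=
  Finset.univ.filter (fun g => ∀ m ∈ A, I g m)

/-- The closure `A''` of a set of attributes `A`. -/
def closure [Fintype G] [Fintype M] (I : G → M → Prop) [∀ g m, Decidable (I g m)]
    (A : Finset M) : Finset M :=
  Finset.univ.filter (fun m => ∀ g ∈ extent I A, I g m)

/-- `C_A = {A ∩ g' | g ∈ G}`. -/
def CA [Fintype G] [Fintype M] [DecidableEq M] (I : G → M → Prop) [∀ g m, Decidable (I g m)]
    (A : Finset M) : Finset (Finset M) :=
  Finset.univ.image (fun g => A ∩ intent I g)

/-- `MC_A`: the maximal elements of `C_A`. -/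
def MCA [Fintype G] [Fintype M] [DecidableEq M] (I : G → M → Prop) [∀ g m, Decidable (I g m)]
    (A : Finset M) : Finset (Finset M) :=
  (CA I A).filter (fun B => ∀ C ∈ CA I A, ¬ B ⊂ C)

/-- if an implication `E → d` with `E ⊆ A` and `d ∈ M \ A` holds in the
context and has nonempty support, then there exists `B ∈ MC_A` with `E ⊆ B ⊆ A`
and `d ∈ B'' \ A`. -/
theorem stmt2 [Fintype G] [Fintype M] [DecidableEq M] (I : G → M → Prop)
    [∀ g m, Decidable (I g m)] (A E : Finset M) (d : M)
    (hE : E ⊆ A) (hd : d ∉ A)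
    (hvalid : extent I E ⊆ extent I {d})
    (hsupp : ∃ g : G, E ⊆ intent I g ∧ d ∈ intent I g) :
    ∃ B ∈ MCA I A, E ⊆ B ∧ B ⊆ A ∧ d ∈ closure I B \ A := by
  obtain ⟨g, hgE, hgd⟩ := hsupp
  -- candidates: elements of CA containing A ∩ g'
  set S := (CA I A).filter (fun C => A ∩ intent I g ⊆ C) with hS
  have hS0 : A ∩ intent I g ∈ S := by
    simp [hS, CA]
  obtain ⟨B, hBS, hBmax⟩ : ∃ B ∈ S, ∀ C ∈ S, ¬ B < C := by
    obtain ⟨B, hB⟩ := Finset.exists_maximal ⟨_, hS0⟩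
    exact ⟨B, hB.1, fun C hC hlt => hlt.2 (hB.2 hC hlt.le)⟩
  rw [hS, Finset.mem_filter] at hBS
  obtain ⟨hBCA, hBsub⟩ := hBS
  have hBMCA : B ∈ MCA I A := by
    rw [MCA, Finset.mem_filter]
    refine ⟨hBCA, fun C hC hlt => ?_⟩
    exact hBmax C (by rw [hS, Finset.mem_filter]; exact ⟨hC, hBsub.trans hlt.subset⟩) hlt
  obtain ⟨h, hh⟩ := Finset.mem_image.mp hBCA
  have hBA : B ⊆ A := by rw [← hh.2]; exact Finset.inter_subset_left
  have hEB : E ⊆ B := fun m hm => hBsub (Finset.mem_inter.mpr ⟨hE hm, hgE hm⟩)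
  refine ⟨B, hBMCA, hEB, hBA, ?_⟩
  rw [Finset.mem_sdiff]
  refine ⟨?_, hd⟩
  simp only [closure, Finset.mem_filter, Finset.mem_univ, true_and]
  intro x hx
  have hxE : x ∈ extent I E := by
    simp only [extent, Finset.mem_filter, Finset.mem_univ, true_and] at hx ⊢
    exact fun m hm => hx m (hEB hm)
  have := hvalid hxE
  simp only [extent, Finset.mem_filter, Finset.mem_univ, true_and] at this
  exact this d (Finset.mem_singleton_self d)

end FCA
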